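/- The p,q-th endpoint rule equals the phantom-median rule with p phantoms equal to (∞,∞), q phantoms equal to (-∞,-∞), and n+1-p-q phantoms equal to (-∞,∞): for all profiles S ∈ Σ^N, f^{p,q}(S) = med(S ∘ P) for this choice of P. -/

import Mathlib

/-- A bounded open nonempty interval of ℝ, given by endpoints `lo < hi`. -/
structure OInt where
  lo : ℝ
  hi : ℝ
  lt : lo < hi

/-- The set of points of the interval. -/
def OInt.toSet (I : OInt) : Set ℝ := Set.Ioo I.lo I.hi

/-- Number of agents whose interval contains a point ≤ x, i.e. |{i : (-∞,x] ∩ S_i ≠ ∅}|. -/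
noncomputable def lowCount {n : ℕ} (S : Fin n → OInt) (x : ℝ) : ℕ :=
  (Finset.univ.filter fun i => (S i).lo < x).card

/-- Number of agents whose interval contains a point ≥ x, i.e. |{i : [x,∞) ∩ S_i ≠ ∅}|. -/
noncomputable def highCount {n : ℕ} (S : Fin n → OInt) (x : ℝ) : ℕ :=
  (Finset.univ.filter fun i => x < (S i).hi).card

/-- The endpoint rule f^{p,q}, as a set:
    {x : |{i : (-∞,x] ∩ S_i ≠ ∅}| ≥ p and |{i : [x,∞) ∩ S_i ≠ ∅}| ≥ q}. -/
def eprSet {n : ℕ} (p q : ℕ) (S : Fin n → OInt) : Set ℝ :=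
  {x | p ≤ lowCount S x ∧ q ≤ highCount S x}

/-- The k-th smallest (1-indexed) value of a finite family of reals. -/
noncomputable def kthSmall {n : ℕ} (a : Fin n → ℝ) (k : ℕ) : ℝ :=
  (List.insertionSort (· ≤ ·) (List.ofFn a)).getD (k - 1) 0

/-- The k-th largest (1-indexed) value of a finite family of reals. -/
noncomputable def kthLarge {n : ℕ} (a : Fin n → ℝ) (k : ℕ) : ℝ :=
  (List.insertionSort (· ≤ ·) (List.ofFn a)).getD (n - k) 0

/-- The order <̄ on the extended reals: x <̄ y iff x = -∞, or y = ∞, or x < y. -/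
def extLt (x y : EReal) : Prop := x = ⊥ ∨ y = ⊤ ∨ x < y

/-- An open interval (lo, hi) of the extended reals with lo <̄ hi; this includes the
half-bounded intervals and the degenerate unbounded intervals (-∞,-∞), (-∞,∞), (∞,∞). -/
structure EOInt where
  lo : EReal
  hi : EReal
  ok : extLt lo hi

open scoped Classical in
/-- Number of phantom intervals containing a point ≤ x. -/
noncomputable def lowCountE {m : ℕ} (P : Fin m → EOInt) (x : ℝ) : ℕ :=
  (Finset.univ.filter fun j => extLt (P j).lo (x : EReal)).card

open scoped Classical in
/-- Number of phantom intervals containing a point ≥ x. -/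
noncomputable def highCountE {m : ℕ} (P : Fin m → EOInt) (x : ℝ) : ℕ :=
  (Finset.univ.filter fun j => extLt (x : EReal) (P j).hi).card

/-- med(S ∘ P): the median rule applied to the 2n+1 intervals obtained by concatenating
the n real intervals S with the n+1 phantom intervals P: the set of x ∈ ℝ such that at
least n+1 of the intervals contain a point ≤ x, and at least n+1 contain a point ≥ x. -/
noncomputable def medPair {n : ℕ} (S : Fin n → OInt) (P : Fin (n + 1) → EOInt) : Set ℝ :=
  {x | n + 1 ≤ lowCount S x + lowCountE P x ∧ n + 1 ≤ highCount S x + highCountE P x}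


open Classical in
theorem cardlt_aux (m k : ℕ) (h : k ≤ m) :
    (Finset.univ.filter fun j : Fin m => (j:ℕ) < k).card = k := by
  rw [Finset.card_filter, Fin.sum_univ_eq_sum_range (fun i => if i < k then 1 else 0),
    ← Finset.card_filter]
  have : Finset.filter (fun i => i < k) (Finset.range m) = Finset.range k := by
    ext i; simp; omega
  rw [this, Finset.card_range]

/-- the p,q-th endpoint rule equals the phantom-median rule with p phantoms
(∞,∞), q phantoms (-∞,-∞), and n+1-p-q phantoms (-∞,∞). -/
theorem endpoint_rule_eq_phantom_median (n p q : ℕ) (hp : 1 ≤ p) (hq : 1 ≤ q)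
    (hpq : p + q ≤ n + 1) (S : Fin n → OInt) :
    eprSet p q S =
      medPair S (fun j =>
        if (j : ℕ) < p then (⟨⊤, ⊤, Or.inr (Or.inl rfl)⟩ : EOInt)
        else if (j : ℕ) < n + 1 - q then (⟨⊥, ⊤, Or.inl rfl⟩ : EOInt)
        else (⟨⊥, ⊥, Or.inl rfl⟩ : EOInt)) := by
  classical
  set P := (fun j : Fin (n+1) =>
        if (j : ℕ) < p then (⟨⊤, ⊤, Or.inr (Or.inl rfl)⟩ : EOInt)
        else if (j : ℕ) < n + 1 - q then (⟨⊥, ⊤, Or.inl rfl⟩ : EOInt)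
        else (⟨⊥, ⊥, Or.inl rfl⟩ : EOInt)) with hP
  ext x
  have hlow : lowCountE P x = n + 1 - p := by
    unfold lowCountE
    have he : (Finset.univ.filter fun j : Fin (n+1) => extLt (P j).lo (x : EReal)) =
        Finset.univ.filter fun j : Fin (n+1) => ¬ ((j:ℕ) < p) := by
      apply Finset.filter_congr
      intro j _
      by_cases h1 : (j:ℕ) < p
      · simp [hP, h1, extLt]
      · by_cases h2 : (j:ℕ) < n+1-q <;> simp [hP, h1, h2, extLt]
    rw [he]
    have h2 := Finset.card_filter_add_card_filter_not
      (s := (Finset.univ : Finset (Fin (n+1)))) (p := fun j => (j:ℕ) < p)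
    have h3 := cardlt_aux (n+1) p (by omega)
    simp only [Finset.card_univ, Fintype.card_fin] at h2
    omega
  have hhigh : highCountE P x = n + 1 - q := by
    unfold highCountE
    have he : (Finset.univ.filter fun j : Fin (n+1) => extLt (x : EReal) (P j).hi) =
        Finset.univ.filter fun j : Fin (n+1) => (j:ℕ) < n + 1 - q := by
      apply Finset.filter_congr
      intro j _
      by_cases h1 : (j:ℕ) < p
      · have : (j:ℕ) < n + 1 - q := by omega
        simp [hP, h1, this, extLt]
      · by_cases h2 : (j:ℕ) < n+1-q <;> simp [hP, h1, h2, extLt]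
    rw [he, cardlt_aux (n+1) (n+1-q) (by omega)]
  simp only [eprSet, medPair, Set.mem_setOf_eq, hlow, hhigh]
  omega
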